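/- Let ζ ∈ k be a primitive n-th root of unity and m, t positive divisors of n with n ∤ mt and gcd(t, n/m) = 1, so that N = n/gcd(n, mt) = n/m. Fix an H_n(ζ,m,t)-module-algebra structure (σ, δ) on A = k[u]/(u^n − 1) with σ(u) = ζ·u and δ(u) = γ·u^{t+1} for some nonzero γ ∈ k. If (τ, δ') is an extension of (σ, δ) to a D(H_n(ζ,m,t))-module-algebra structure on A, then there exist an integer d with 0 < d < n and m ≡ −dt (mod n) and a scalar δ₀ ∈ k such that τ(u) = ζ^d·u and δ'(u) = δ₀·u^{n+1−t}; and if moreover 2m ≠ n, then γ·δ₀·(n−t)_{ζ^m} = ζ^{−m} − 1. -/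

import Mathlib

lemma aux_eig {k A : Type*} [Field k] [AddCommGroup A] [Module k A] {n : ℕ}
    (b : Module.Basis (Fin n) k A) (g : Fin n → k) (L : A →ₗ[k] A)
    (hLb : ∀ i, L (b i) = g i • b i) (v : A) (μ : k) (hv : L v = μ • v)
    (i₀ : Fin n) (h : ∀ i, i ≠ i₀ → g i ≠ μ) : v = b.repr v i₀ • b i₀ := by
  have h1 : L v = ∑ i, (g i * b.repr v i) • b i := by
    conv_lhs => rw [← b.sum_repr v]
    rw [map_sum]
    refine Finset.sum_congr rfl fun i _ => ?_
    rw [map_smul, hLb, smul_smul, mul_comm]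
  have h2 : μ • v = ∑ i, (μ * b.repr v i) • b i := by
    conv_lhs => rw [← b.sum_repr v]
    rw [Finset.smul_sum]
    refine Finset.sum_congr rfl fun i _ => ?_
    rw [smul_smul]
  have e1 : ⇑(b.repr (L v)) = fun i => g i * b.repr v i := by
    rw [h1]; exact b.repr_sum_self _
  have e2 : ⇑(b.repr (μ • v)) = fun i => μ * b.repr v i := by
    rw [h2]; exact b.repr_sum_self _
  have h3 : ∀ i, g i * b.repr v i = μ * b.repr v i := by
    intro i
    have := congrFun ((e1.symm.trans (congrArg (fun w => ⇑(b.repr w)) hv)).trans e2) i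
    simpa using this
  have h4 : ∀ i, i ≠ i₀ → b.repr v i = 0 := by
    intro i hi
    have := h3 i
    have hne : g i - μ ≠ 0 := sub_ne_zero.mpr (h i hi)
    have : (g i - μ) * b.repr v i = 0 := by ring_nf; linear_combination this
    exact (mul_eq_zero.mp this).resolve_left hne
  conv_lhs => rw [← b.sum_repr v]
  rw [Finset.sum_eq_single i₀]
  · intro i _ hi; rw [h4 i hi, zero_smul]
  · intro hi; exact absurd (Finset.mem_univ i₀) hi


/-- The `q`-symbol `(s)_w = 1 + w + w² + ⋯ + w^(s-1)`. -/
def qSym {k : Type*} [Field k] (w : k) (s : ℕ) : k := ∑ i ∈ Finset.range s, w ^ i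

/-- An `H_n(ζ,m,t)`-module-algebra structure on `A`, given by the action `σ` of the
grouplike generator `y` and the action `δ` of the `(y^m,1)`-skew primitive `x`;
here `N` is the nilpotency order of `x`. -/
def IsHAction {k A : Type*} [Field k] [CommRing A] [Algebra k A]
    (n m t N : ℕ) (ζ : k) (σ : A ≃ₐ[k] A) (δ : A →ₗ[k] A) : Prop :=
  σ ^ n = 1 ∧ δ 1 = 0 ∧
  (∀ a c : A, δ (a * c) = (σ ^ m) a * δ c + δ a * c) ∧
  δ ^ N = 0 ∧
  σ.toLinearMap ∘ₗ δ = ζ ^ t • (δ ∘ₗ σ.toLinearMap)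

/-- The data of an extension of an `H_n(ζ,m,t)`-module-algebra structure `(σ, δ)` on `A`
to a `D(H_n(ζ,m,t))`-module-algebra structure, given by the action `τ` of the grouplike
`Y` and the action `δ'` of the `(1,Y^t)`-skew primitive `X` of the Drinfel'd double. -/
def IsDHExtension {k A : Type*} [Field k] [CommRing A] [Algebra k A]
    (n m t N : ℕ) (ζ : k) (σ : A ≃ₐ[k] A) (δ : A →ₗ[k] A)
    (τ : A ≃ₐ[k] A) (δ' : A →ₗ[k] A) : Prop :=
  τ ^ n = 1 ∧ δ' 1 = 0 ∧
  (∀ a c : A, δ' (a * c) = a * δ' c + δ' a * (τ ^ t) c) ∧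
  δ' ^ N = 0 ∧
  τ.toLinearMap ∘ₗ δ' = ζ ^ m • (δ' ∘ₗ τ.toLinearMap) ∧
  σ * τ = τ * σ ∧
  δ ∘ₗ τ.toLinearMap = ζ ^ m • (τ.toLinearMap ∘ₗ δ) ∧
  σ.toLinearMap ∘ₗ δ' = (ζ⁻¹ ^ t) • (δ' ∘ₗ σ.toLinearMap) ∧
  δ ∘ₗ δ' - δ' ∘ₗ δ = (τ ^ t : A ≃ₐ[k] A).toLinearMap - (σ ^ m : A ≃ₐ[k] A).toLinearMap

/-- Necessity part of Theorem 4.17: any extension of the `H_n(ζ,m,t)`-module-algebra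
structure on `A = k[u]/(uⁿ - 1)` to `D(H_n(ζ,m,t))` has `τ(u) = ζ^d·u` with
`m ≡ -dt (mod n)`, `0 < d < n`, and `δ'(u) = δ₀·u^(n+1-t)`; if `2m ≠ n`, then moreover
`γ·δ₀·(n-t)_{ζ^m} = ζ^{-m} - 1`. -/
theorem stmt_10 (k : Type*) [Field k] [IsAlgClosed k] [CharZero k]
    (n : ℕ) (hn : 0 < n) (ζ : k) (hζ : IsPrimitiveRoot ζ n)
    (m t : ℕ) (hm0 : 0 < m) (ht0 : 0 < t) (hmn : m ∣ n) (htn : t ∣ n)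
    (hnmt : ¬ n ∣ m * t) (hcop : Nat.gcd t (n / m) = 1)
    (A : Type*) [CommRing A] [Algebra k A]
    (u : A) (b : Module.Basis (Fin n) k A) (hb : ∀ i : Fin n, b i = u ^ (i : ℕ))
    (hu : u ^ n = 1)
    (σ : A ≃ₐ[k] A) (δ : A →ₗ[k] A)
    (hact : IsHAction n m t (n / Nat.gcd n (m * t)) ζ σ δ)
    (γ : k) (hγ : γ ≠ 0) (hσu : σ u = ζ • u) (hδu : δ u = γ • u ^ (t + 1)) :
    ∀ (τ : A ≃ₐ[k] A) (δ' : A →ₗ[k] A),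
      IsDHExtension n m t (n / Nat.gcd n (m * t)) ζ σ δ τ δ' →
      ∃ d : ℕ, 0 < d ∧ d < n ∧ n ∣ (m + d * t) ∧
        ∃ δ₀ : k, τ u = ζ ^ d • u ∧ δ' u = δ₀ • u ^ (n + 1 - t) ∧
          (2 * m ≠ n → γ * δ₀ * qSym (ζ ^ m) (n - t) = ζ⁻¹ ^ m - 1) := by
  intro τ δ' hext
  obtain ⟨hσn, hδ1, hδmul, hδN, hσδ⟩ := hact
  obtain ⟨hτn, hδ'1, hδ'mul, hδ'N, hτδ', hcs, hδτ, hσδ', hcomm⟩ := hext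
  haveI : NeZero n := ⟨hn.ne'⟩
  -- basic numerics
  have hmltn : m < n := by
    rcases lt_or_eq_of_le (Nat.le_of_dvd hn hmn) with h | h
    · exact h
    · exact absurd (h ▸ Dvd.intro t rfl : n ∣ m * t) hnmt
  have htltn : t < n := by
    rcases lt_or_eq_of_le (Nat.le_of_dvd hn htn) with h | h
    · exact h
    · exact absurd (h ▸ (Dvd.intro_left m rfl) : n ∣ m * t) hnmt
  have hn2 : 2 ≤ n := by omega
  haveI : Nontrivial A := nontrivial_of_ne (b ⟨0, hn⟩) 0 (b.ne_zero _)
  have hζn : ζ ^ n = 1 := hζ.pow_eq_one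
  have hupow : ∀ a : ℕ, u ^ a = u ^ (a % n) := by
    intro a
    conv_lhs => rw [← Nat.mod_add_div a n, pow_add, pow_mul, hu, one_pow, mul_one]
  have hzpow : ∀ a : ℕ, ζ ^ a = ζ ^ (a % n) := by
    intro a
    conv_lhs => rw [← Nat.mod_add_div a n, pow_add, pow_mul, hζn, one_pow, mul_one]
  have hUu : IsUnit u := by
    refine IsUnit.of_mul_eq_one (a := u) (u ^ (n - 1)) ?_
    rw [← pow_succ']
    have : n - 1 + 1 = n := by omega
    rw [this, hu]
  have hune : ∀ s : ℕ, u ^ s ≠ 0 := fun s => (hUu.pow s).ne_zero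
  have hcancel : ∀ (s : ℕ) (α β : k), α • u ^ s = β • u ^ s → α = β := by
    intro s α β h
    have : (α - β) • u ^ s = 0 := by rw [sub_smul, h, sub_self]
    rcases smul_eq_zero.mp this with h' | h'
    · exact sub_eq_zero.mp h'
    · exact absurd h' (hune s)
  -- σ acts diagonally on the basis
  have hσb : ∀ i : Fin n, σ (b i) = ζ ^ (i : ℕ) • b i := by
    intro i
    rw [hb, map_pow, hσu, smul_pow]
  -- τ u is an eigenvector of σ with eigenvalue ζ
  have hστu : σ (τ u) = ζ • τ u := by
    have h1 : (σ * τ) u = (τ * σ) u := by rw [hcs]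
    have h2 : σ (τ u) = τ (σ u) := h1
    rw [h2, hσu, map_smul]
  have i1 : Fin n := ⟨1, hn2⟩
  have hτu' : τ u = b.repr (τ u) (⟨1, hn2⟩ : Fin n) • b (⟨1, hn2⟩ : Fin n) := by
    refine aux_eig b (fun i => ζ ^ (i : ℕ)) σ.toLinearMap hσb (τ u) ζ hστu _ ?_
    intro i hi hC
    have : (i : ℕ) = 1 := hζ.pow_inj i.isLt hn2 (by rw [pow_one]; exact hC)
    exact hi (Fin.ext this)
  set c : k := b.repr (τ u) (⟨1, hn2⟩ : Fin n) with hcdef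
  have hτu : τ u = c • u := by rw [hτu', hb]; norm_num
  have hτpow : ∀ j : ℕ, (τ ^ j) u = c ^ j • u := by
    intro j
    induction j with
    | zero => simp
    | succ j ih =>
      have : (τ ^ (j + 1)) u = (τ ^ j) (τ u) := by
        rw [pow_succ]; rfl
      rw [this, hτu, map_smul, ih, smul_smul, pow_succ, mul_comm]
  have hcn : c ^ n = 1 := by
    have h1 : (τ ^ n) u = u := by rw [hτn]; rfl
    have h2 : c ^ n • u = (1 : k) • u := by rw [← hτpow, h1, one_smul]
    have := hcancel 1 (c ^ n) 1 (by simpa using h2)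
    exact this
  have hc0 : c ≠ 0 := fun h => by simp [h, zero_pow hn.ne'] at hcn
  -- the equation ζ^m * c^t = 1
  have hτδu : δ (τ u) = ζ ^ m • τ (δ u) := by
    have := DFunLike.congr_fun hδτ u
    simpa using this
  have hkey : ζ ^ m * c ^ t = 1 := by
    have lhs : δ (τ u) = (c * γ) • u ^ (t + 1) := by
      rw [hτu, map_smul, hδu, smul_smul]
    have rhs : ζ ^ m • τ (δ u) = (ζ ^ m * (γ * c ^ (t + 1))) • u ^ (t + 1) := by
      rw [hδu, map_smul, map_pow, hτu, smul_pow, smul_smul, smul_smul, mul_assoc]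
    have h3 : c * γ = ζ ^ m * (γ * c ^ (t + 1)) := hcancel _ _ _ (by rw [← lhs, ← rhs, hτδu])
    have h4 : c * γ * 1 = c * γ * (ζ ^ m * c ^ t) := by
      ring_nf
      ring_nf at h3
      linear_combination h3
    exact (mul_left_cancel₀ (mul_ne_zero hc0 hγ) h4).symm
  obtain ⟨d, hdlt, hcd⟩ := hζ.eq_pow_of_pow_eq_one hcn
  have hdvd : n ∣ m + d * t := by
    rw [← hζ.pow_eq_one_iff_dvd]
    rw [pow_add, pow_mul, hcd]
    exact hkey
  have hdpos : 0 < d := by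
    rcases Nat.eq_zero_or_pos d with h | h
    · exfalso
      rw [h] at hdvd
      simp at hdvd
      have : m = n := le_antisymm (le_of_lt hmltn) (Nat.le_of_dvd hm0 hdvd)
      omega
    · exact h
  -- δ' u is an eigenvector of σ
  have hσδ'u : σ (δ' u) = (ζ⁻¹ ^ t * ζ) • δ' u := by
    have h1 := DFunLike.congr_fun hσδ' u
    simp only [LinearMap.coe_comp, Function.comp_apply, LinearMap.smul_apply,
      AlgEquiv.toLinearMap_apply] at h1
    rw [h1, hσu, map_smul, smul_smul]
  have hi2lt : (n + 1 - t) % n < n := Nat.mod_lt _ hn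
  have hδ'u' : δ' u = b.repr (δ' u) (⟨(n + 1 - t) % n, hi2lt⟩ : Fin n) •
      b (⟨(n + 1 - t) % n, hi2lt⟩ : Fin n) := by
    refine aux_eig b (fun i => ζ ^ (i : ℕ)) σ.toLinearMap hσb (δ' u) _ hσδ'u _ ?_
    intro i hi hC
    -- from ζ^i = ζ⁻¹^t * ζ deduce ζ^(i+t) = ζ^1
    have hζ0 : ζ ≠ 0 := fun h => by rw [h, zero_pow hn.ne'] at hζn; exact zero_ne_one hζn
    have h2 : ζ ^ ((i : ℕ) + t) = ζ ^ 1 := by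
      rw [pow_add, hC, pow_one]
      field_simp
      rw [one_div, inv_pow, inv_mul_cancel₀ (pow_ne_zero _ hζ0)]
    have h3 : ((i : ℕ) + t) % n = 1 % n := by
      apply hζ.pow_inj (Nat.mod_lt _ hn) (Nat.mod_lt _ hn)
      rw [← hzpow, ← hzpow]; exact h2
    have h4 : ((i : ℕ) + t) % n = 1 := by rw [h3, Nat.mod_eq_of_lt hn2]
    apply hi
    apply Fin.ext
    show (i : ℕ) = (n + 1 - t) % n
    rcases Nat.lt_or_ge ((i : ℕ) + t) n with hlt | hge
    · rw [Nat.mod_eq_of_lt hlt] at h4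
      have ht1 : t = 1 := by omega
      have hi0 : (i : ℕ) = 0 := by omega
      rw [hi0, ht1]
      simp
    · have hsub : ((i : ℕ) + t) % n = (i : ℕ) + t - n := by
        rw [Nat.mod_eq_sub_mod hge, Nat.mod_eq_of_lt (by omega)]
      rw [hsub] at h4
      have hit : (i : ℕ) = n + 1 - t := by omega
      have ht2 : 2 ≤ t := by
        by_contra h
        have : t = 1 := by omega
        rw [this] at hit
        have := i.isLt
        omega
      rw [hit, Nat.mod_eq_of_lt (by omega)]
  set δ₀ : k := b.repr (δ' u) (⟨(n + 1 - t) % n, hi2lt⟩ : Fin n) with hδ₀def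
  have hδ'u : δ' u = δ₀ • u ^ (n + 1 - t) := by
    rw [hδ'u', hb]
    congr 1
    exact (hupow _).symm
  refine ⟨d, hdpos, hdlt, hdvd, δ₀, by rw [hτu, hcd], hδ'u, ?_⟩
  intro h2m
  set q : k := ζ ^ m with hqdef
  set Q : k := c ^ t with hQdef
  have hqQ : q * Q = 1 := hkey
  have hq0 : q ≠ 0 := left_ne_zero_of_mul_eq_one hqQ
  have hqn : q ^ n = 1 := by
    rw [hqdef, ← pow_mul, mul_comm, pow_mul, hζn, one_pow]
  have hq1 : q ≠ 1 := by
    intro h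
    have := (hζ.pow_eq_one_iff_dvd m).mp h
    have := Nat.le_of_dvd hm0 this
    omega
  have hqm1 : q ≠ -1 := by
    intro h
    have h2 : ζ ^ (2 * m) = 1 := by
      rw [two_mul, pow_add, ← hqdef, h]
      ring
    obtain ⟨e, he⟩ := (hζ.pow_eq_one_iff_dvd (2 * m)).mp h2
    match e, he with
    | 0, he => omega
    | 1, he => omega
    | (e + 2), he =>
      have h3 : n * 2 ≤ n * (e + 2) := Nat.mul_le_mul_left n (by omega)
      omega
  have hqs1 : q - 1 ≠ 0 := sub_ne_zero.mpr hq1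
  have hqa1 : q + 1 ≠ 0 := fun h => hqm1 (eq_neg_of_add_eq_zero_left h)
  have hqt0 : q ^ t ≠ 0 := pow_ne_zero _ hq0
  -- actions of σ^m and τ^t on u
  have hσpow : ∀ j : ℕ, (σ ^ j) u = ζ ^ j • u := by
    intro j
    induction j with
    | zero => simp
    | succ j ih =>
      have : (σ ^ (j + 1)) u = (σ ^ j) (σ u) := by rw [pow_succ]; rfl
      rw [this, hσu, map_smul, ih, smul_smul, pow_succ, mul_comm]
  have hσmu : (σ ^ m) u = q • u := hσpow m
  have hτtu : (τ ^ t) u = Q • u := hτpow t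
  -- action of δ on powers of u
  have hδpow : ∀ a : ℕ, δ (u ^ a) = (γ * qSym q a) • u ^ (a + t) := by
    intro a
    induction a with
    | zero => simp [qSym, hδ1]
    | succ a ih =>
      have h1 : u ^ (a + 1) = u * u ^ a := by ring
      rw [h1, hδmul, hσmu, ih, hδu, smul_mul_smul_comm, smul_mul_assoc]
      rw [← pow_succ' u (a + t), ← pow_add]
      have h2 : a + t + 1 = a + 1 + t := by omega
      have h3 : t + 1 + a = a + 1 + t := by omega
      rw [h2, h3, ← add_smul]
      congr 1
      rw [qSym, qSym, geom_sum_succ]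
      ring
  -- action of δ' on powers of u
  have hδ'pow : ∀ a : ℕ, δ' (u ^ a) = (δ₀ * qSym Q a) • u ^ (n + a - t) := by
    intro a
    induction a with
    | zero => simp [qSym, hδ'1]
    | succ a ih =>
      have h1 : u ^ (a + 1) = u * u ^ a := by ring
      have h2 : (τ ^ t) (u ^ a) = Q ^ a • u ^ a := by
        rw [map_pow, hτtu, smul_pow]
      rw [h1, hδ'mul, ih, h2, hδ'u]
      rw [mul_smul_comm, smul_mul_smul_comm]
      rw [← pow_succ' u (n + a - t), ← pow_add]
      have h3 : n + a - t + 1 = n + (a + 1) - t := by omega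
      have h4 : n + 1 - t + a = n + (a + 1) - t := by omega
      rw [h3, h4, ← add_smul]
      congr 1
      rw [qSym, qSym, geom_sum_succ']
      ring
  -- the commutator relation applied to u
  have hu_n1 : u ^ (n + 1) = u := by rw [pow_succ, hu, one_mul]
  have hLHS1 : δ (δ' u) = (δ₀ * (γ * qSym q (n + 1 - t))) • u := by
    rw [hδ'u, map_smul, hδpow (n + 1 - t), smul_smul,
      show n + 1 - t + t = n + 1 from by omega, hu_n1]
  have hLHS2 : δ' (δ u) = (γ * (δ₀ * qSym Q (t + 1))) • u := by
    rw [hδu, map_smul, hδ'pow (t + 1), smul_smul,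
      show n + (t + 1) - t = n + 1 from by omega, hu_n1]
  have hE : γ * δ₀ * qSym q (n + 1 - t) - γ * δ₀ * qSym Q (t + 1) = Q - q := by
    have h1 := DFunLike.congr_fun hcomm u
    simp only [LinearMap.sub_apply, LinearMap.coe_comp, Function.comp_apply,
      AlgEquiv.toLinearMap_apply] at h1
    rw [hLHS1, hLHS2, hτtu, hσmu, ← sub_smul, ← sub_smul] at h1
    have h2 : (δ₀ * (γ * qSym q (n + 1 - t)) - γ * (δ₀ * qSym Q (t + 1))) • u ^ 1
        = (Q - q) • u ^ 1 := by rw [pow_one]; exact h1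
    have h3 := hcancel 1 _ _ h2
    linear_combination h3
  -- geometric sum identities
  have g1 : (q - 1) * qSym q (n + 1 - t) = q ^ (n + 1 - t) - 1 := by
    rw [qSym, mul_comm]; exact geom_sum_mul q _
  have g2 : (Q - 1) * qSym Q (t + 1) = Q ^ (t + 1) - 1 := by
    rw [qSym, mul_comm]; exact geom_sum_mul Q _
  have g3 : (q - 1) * qSym q (n - t) = q ^ (n - t) - 1 := by
    rw [qSym, mul_comm]; exact geom_sum_mul q _
  have e1 : q ^ (n + 1 - t) * q ^ t = q := by
    rw [← pow_add, show n + 1 - t + t = n + 1 from by omega, pow_succ, hqn, one_mul]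
  have e2 : q ^ (n - t) * q ^ t = 1 := by
    rw [← pow_add, show n - t + t = n from by omega, hqn]
  have e3 : Q ^ (t + 1) = Q ^ t * Q := pow_succ Q t
  have e4 : Q ^ t * q ^ t = 1 := by
    rw [← mul_pow, mul_comm Q q, hqQ, one_pow]
  set c0 : k := γ * δ₀ with hc0def
  set a1 : k := qSym q (n + 1 - t)
  set a2 : k := qSym Q (t + 1)
  set s0 : k := qSym q (n - t)
  have hA : c0 * a1 * (q - 1) * q ^ t = c0 * (q - q ^ t) := by
    linear_combination (c0 * q ^ t) * g1 + c0 * e1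
  have hB : c0 * a2 * (q - 1) * q ^ t = c0 * (q * q ^ t - 1) := by
    linear_combination (c0 * q ^ t * a2 - c0) * hqQ - (c0 * q * q ^ t) * g2
      - (c0 * q * q ^ t) * e3 - (c0 * q * Q) * e4
  have s1 : c0 * s0 * (q - 1) * q ^ t = c0 * (1 - q ^ t) := by
    linear_combination (c0 * q ^ t) * g3 + c0 * e2
  have s2 : c0 * (q + 1) * (1 - q ^ t) = (Q - q) * (q - 1) * q ^ t := by
    linear_combination ((q - 1) * q ^ t) * hE - hA + hB
  have key : c0 * s0 * ((q - 1) * (q + 1) * q ^ t) = (Q - 1) * ((q - 1) * (q + 1) * q ^ t) := by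
    linear_combination (q + 1) * s1 + s2 - ((q - 1) * q ^ t) * hqQ
  have hne : (q - 1) * (q + 1) * q ^ t ≠ 0 := by
    exact mul_ne_zero (mul_ne_zero hqs1 hqa1) hqt0
  have hfin : c0 * s0 = Q - 1 := mul_right_cancel₀ hne key
  have hQinv : Q = ζ⁻¹ ^ m := by
    rw [inv_pow, ← hqdef]
    exact eq_inv_of_mul_eq_one_left (by rw [mul_comm]; exact hqQ)
  rw [← hQinv]
  exact hfin
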